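/- For every integer k ≥ 1, setting n = (3^k − 1)/2 and s = n − 1, there exists a tournament D on 2n vertices with minimum out-degree at least s such that every induced subdigraph of D on n vertices has minimum out-degree at most s/2 − (k−1)/2 (equivalently, at most ((3^k−1)/2 − k)/2). -/

import Mathlib

open Finset

/-- Out-degree of `v` within the induced subdigraph on `X`. -/
def outDegIn {V : Type*} [DecidableEq V] (A : V → V → Prop) [DecidableRel A]
    (X : Finset V) (v : V) : ℕ :=
  (X.filter (fun w => A v w)).card

/-- Minimum out-degree of the induced subdigraph on `X` (0 for the empty digraph). -/
def minOutDeg {V : Type*} [DecidableEq V] (A : V → V → Prop) [DecidableRel A]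
    (X : Finset V) : ℕ :=
  if h : X.Nonempty then X.inf' h (outDegIn A X) else 0

/-- Balanced-ternary weight. -/
def bw : ℕ → ℕ
  | n =>
    if h0 : n = 0 then 0
    else if h1 : n % 3 = 0 then bw (n / 3)
    else if h2 : n % 3 = 1 then bw (n / 3) + 1
    else bw (n / 3 + 1) + 1
decreasing_by
  · omega
  · omega
  · omega

lemma bw_zero : bw 0 = 0 := by rw [bw]; simp

lemma bw_3mul (q : ℕ) : bw (3 * q) = bw q := by
  rcases Nat.eq_zero_or_pos q with rfl | hq
  · norm_num [bw_zero]
  · rw [bw, show (3 * q) / 3 = q from by omega]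
    split_ifs <;> first | contradiction | omega

lemma bw_3mul1 (q : ℕ) : bw (3 * q + 1) = bw q + 1 := by
  rw [bw, show (3 * q + 1) / 3 = q from by omega]
  split_ifs <;> first | contradiction | omega

lemma bw_3mul2 (q : ℕ) : bw (3 * q + 2) = bw (q + 1) + 1 := by
  rw [bw, show (3 * q + 2) / 3 = q from by omega]
  split_ifs <;> first | contradiction | omega

lemma bw_one : bw 1 = 1 := by
  have := bw_3mul1 0
  simpa [bw_zero] using this

lemma bw_steps (x : ℕ) : bw (x + 1) ≤ bw x + 1 ∧ bw x ≤ bw (x + 1) + 1 := by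
  induction x using Nat.strong_induction_on with
  | _ x ih =>
    rcases (show x % 3 = 0 ∨ x % 3 = 1 ∨ x % 3 = 2 by omega) with h | h | h
    · obtain ⟨q, rfl⟩ : ∃ q, x = 3 * q := ⟨x / 3, by omega⟩
      rw [bw_3mul1, bw_3mul]
      omega
    · obtain ⟨q, rfl⟩ : ∃ q, x = 3 * q + 1 := ⟨x / 3, by omega⟩
      rw [show 3 * q + 1 + 1 = 3 * q + 2 by omega, bw_3mul2, bw_3mul1]
      have := ih q (by omega)
      omega
    · obtain ⟨q, rfl⟩ : ∃ q, x = 3 * q + 2 := ⟨x / 3, by omega⟩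
      rw [show 3 * q + 2 + 1 = 3 * (q + 1) by omega, bw_3mul, bw_3mul2]
      omega

lemma bw_add_le (x d : ℕ) : bw (x + d) ≤ bw x + d := by
  induction d with
  | zero => simp
  | succ d ih =>
    rw [show x + (d + 1) = x + d + 1 from by omega]
    have := (bw_steps (x + d)).1
    omega

lemma le_bw_add (x d : ℕ) : bw x ≤ bw (x + d) + d := by
  induction d with
  | zero => simp
  | succ d ih =>
    rw [show x + (d + 1) = x + d + 1 from by omega]
    have := (bw_steps (x + d)).2
    omega

lemma bw_le_self (n : ℕ) : bw n ≤ n := by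
  have := bw_add_le 0 n
  simpa [bw_zero] using this

lemma bw_P (a b c : ℕ) (h1 : a + b ≤ 2 * c) (h2 : 2 * b ≤ a + c) :
    bw (a + b + c) + b ≤ bw a + c := by
  rcases le_or_gt a b with hab | hab
  · have e1 : bw (a + b + c) ≤ bw b + (a + c - 2 * b) := by
      calc bw (a + b + c) = bw (3 * b + (a + c - 2 * b)) := by congr 1; omega
        _ ≤ bw (3 * b) + (a + c - 2 * b) := bw_add_le _ _
        _ = bw b + (a + c - 2 * b) := by rw [bw_3mul]
    have e2 : bw b ≤ bw a + (b - a) := by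
      calc bw b = bw (a + (b - a)) := by congr 1; omega
        _ ≤ bw a + (b - a) := bw_add_le _ _
    omega
  · obtain ⟨d, rfl⟩ : ∃ d, a = b + d := ⟨a - b, by omega⟩
    obtain ⟨e, rfl⟩ : ∃ e, c = b + e := ⟨c - b, by omega⟩
    set g := (d + e + 1) / 3 with hg
    have e2 : bw (b + g) ≤ bw (b + d) + ((d - g) + (g - d)) := by
      rcases le_or_gt g d with h | h
      · have h' := le_bw_add (b + g) (d - g)
        rw [show b + g + (d - g) = b + d from by omega] at h'
        omega
      · have h' := bw_add_le (b + d) (g - d)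
        rw [show b + d + (g - d) = b + g from by omega] at h'
        omega
    have e1 : bw (b + d + b + (b + e)) ≤ bw (b + g) + ((d + e - 3 * g) + (3 * g - (d + e))) := by
      rcases le_or_gt (3 * g) (d + e) with h | h
      · have h' := bw_add_le (3 * (b + g)) (d + e - 3 * g)
        rw [show 3 * (b + g) + (d + e - 3 * g) = b + d + b + (b + e) from by omega, bw_3mul] at h'
        omega
      · have h' := le_bw_add (b + d + b + (b + e)) (3 * g - (d + e))
        rw [show b + d + b + (b + e) + (3 * g - (d + e)) = 3 * (b + g) from by omega, bw_3mul] at h'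
        omega
    omega

lemma bw_L2 (a b c : ℕ) (h : 1 ≤ a + b + c) :
    (1 ≤ a ∧ bw (a + b + c) + b ≤ bw a + c) ∨
    (1 ≤ b ∧ bw (a + b + c) + c ≤ bw b + a) ∨
    (1 ≤ c ∧ bw (a + b + c) + a ≤ bw c + b) := by
  rcases Nat.eq_zero_or_pos a with rfl | ha
  · rcases Nat.eq_zero_or_pos b with rfl | hb
    · right; right
      refine ⟨by omega, ?_⟩
      simp
    · rcases Nat.eq_zero_or_pos c with rfl | hc
      · right; left
        refine ⟨hb, ?_⟩
        simp
      · right; right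
        refine ⟨hc, ?_⟩
        have h' := bw_add_le c b
        rw [show c + b = 0 + b + c from by omega] at h'
        omega
  · rcases Nat.eq_zero_or_pos b with rfl | hb
    · left
      refine ⟨ha, ?_⟩
      have h' := bw_add_le a c
      rw [show a + c = a + 0 + c from by omega] at h'
      omega
    · rcases Nat.eq_zero_or_pos c with rfl | hc
      · right; left
        refine ⟨hb, ?_⟩
        have h' := bw_add_le b a
        rw [show b + a = a + b + 0 from by omega] at h'
        omega
      · have hcases : (a + b ≤ 2 * c ∧ 2 * b ≤ a + c) ∨ (b + c ≤ 2 * a ∧ 2 * c ≤ b + a) ∨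
          (c + a ≤ 2 * b ∧ 2 * a ≤ c + b) := by omega
        rcases hcases with ⟨g1, g2⟩ | ⟨g1, g2⟩ | ⟨g1, g2⟩
        · exact Or.inl ⟨ha, bw_P a b c g1 g2⟩
        · have h' := bw_P b c a g1 g2
          rw [show b + c + a = a + b + c from by omega] at h'
          exact Or.inr (Or.inl ⟨hb, h'⟩)
        · have h' := bw_P c a b g1 g2
          rw [show c + a + b = a + b + c from by omega] at h'
          exact Or.inr (Or.inr ⟨hc, h'⟩)

lemma bw_nk (k : ℕ) : bw ((3 ^ k - 1) / 2) = k := by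
  induction k with
  | zero => simpa using bw_zero
  | succ k ih =>
    have h3 : (3:ℕ) ^ (k + 1) = 3 * 3 ^ k := by ring
    have h1 : 1 ≤ (3:ℕ) ^ k := Nat.one_le_pow _ _ (by norm_num)
    have h2 : (3:ℕ) ^ k % 2 = 1 := by simp [Nat.pow_mod]
    have e : (3 ^ (k + 1) - 1) / 2 = 3 * ((3 ^ k - 1) / 2) + 1 := by rw [h3]; omega
    rw [e, bw_3mul1, ih]

/-- The recursive tournament `T_k` on `{0, ..., 3^k - 1}`. -/
def beats : ℕ → ℕ → ℕ → Bool
  | 0, _, _ => false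
  | k + 1, u, v =>
    if u % 3 = v % 3 then beats k (u / 3) (v / 3)
    else decide (v % 3 = (u % 3 + 1) % 3)

lemma beats_self (k u : ℕ) : beats k u u = false := by
  induction k generalizing u with
  | zero => rfl
  | succ k ih => simp [beats, ih]

lemma beats_asym (k : ℕ) : ∀ u v : ℕ, u < 3 ^ k → v < 3 ^ k → u ≠ v →
    beats k u v = !beats k v u := by
  induction k with
  | zero => intro u v hu hv huv; omega
  | succ k ih =>
    intro u v hu hv huv
    have h3 : (3:ℕ) ^ (k + 1) = 3 * 3 ^ k := by ring
    by_cases h : u % 3 = v % 3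
    · have hne : u / 3 ≠ v / 3 := by omega
      simp only [beats, if_pos h, if_pos h.symm]
      exact ih (u / 3) (v / 3) (by omega) (by omega) hne
    · simp only [beats, if_neg h, if_neg (Ne.symm h)]
      have hu3 : u % 3 < 3 := Nat.mod_lt _ (by norm_num)
      have hv3 : v % 3 < 3 := Nat.mod_lt _ (by norm_num)
      rcases (show u % 3 = 0 ∨ u % 3 = 1 ∨ u % 3 = 2 by omega) with h1 | h1 | h1 <;>
        rcases (show v % 3 = 0 ∨ v % 3 = 1 ∨ v % 3 = 2 by omega) with h2 | h2 | h2 <;>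
          simp [h1, h2] <;> omega

/-- Counting elements of a residue class with a property on the quotient. -/
lemma class_card (m r : ℕ) (hr : r < 3) (p : ℕ → Bool) :
    ((Finset.range (3 * m)).filter (fun w => w % 3 = r ∧ p (w / 3) = true)).card
      = ((Finset.range m).filter (fun z => p z = true)).card := by
  apply Finset.card_nbij' (fun w => w / 3) (fun z => 3 * z + r)
  · intro w hw
    simp only [Finset.mem_coe, Finset.mem_filter, Finset.mem_range] at hw ⊢
    exact ⟨by omega, hw.2.2⟩
  · intro z hz
    simp only [Finset.mem_coe, Finset.mem_filter, Finset.mem_range] at hz ⊢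
    refine ⟨by omega, by omega, ?_⟩
    rw [show (3 * z + r) / 3 = z from by omega]
    exact hz.2
  · intro w hw
    simp only [Finset.mem_coe, Finset.mem_filter, Finset.mem_range] at hw
    show 3 * (w / 3) + r = w
    omega
  · intro z hz
    show (3 * z + r) / 3 = z
    omega

lemma beats_count (k : ℕ) : ∀ u, u < 3 ^ k →
    ((Finset.range (3 ^ k)).filter (fun w => beats k u w = true)).card = (3 ^ k - 1) / 2 := by
  induction k with
  | zero => intro u hu; simp [beats]
  | succ k ih =>
    intro u hu
    have h3 : (3:ℕ) ^ (k + 1) = 3 * 3 ^ k := by ring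
    have h1 : 1 ≤ (3:ℕ) ^ k := Nat.one_le_pow _ _ (by norm_num)
    have hsplit : (Finset.range (3 ^ (k + 1))).filter (fun w => beats (k + 1) u w = true)
        = ((Finset.range (3 ^ (k + 1))).filter
            (fun w => w % 3 = u % 3 ∧ beats k (u / 3) (w / 3) = true))
          ∪ ((Finset.range (3 ^ (k + 1))).filter (fun w => w % 3 = (u % 3 + 1) % 3)) := by
      rw [← Finset.filter_or]
      apply Finset.filter_congr
      intro w _
      simp only [beats]
      by_cases h : u % 3 = w % 3
      · simp only [if_pos h]
        constructor
        · intro hb; exact Or.inl ⟨h.symm, hb⟩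
        · rintro (⟨_, hb⟩ | hb)
          · exact hb
          · omega
      · simp only [if_neg h, decide_eq_true_eq]
        constructor
        · intro hb; exact Or.inr hb
        · rintro (⟨hw, _⟩ | hb)
          · exact absurd hw.symm h
          · exact hb
    have hdisj : Disjoint
        ((Finset.range (3 ^ (k + 1))).filter
            (fun w => w % 3 = u % 3 ∧ beats k (u / 3) (w / 3) = true))
        ((Finset.range (3 ^ (k + 1))).filter (fun w => w % 3 = (u % 3 + 1) % 3)) := by
      apply Finset.disjoint_left.mpr
      intro w hw1 hw2
      simp only [Finset.mem_filter] at hw1 hw2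
      omega
    have hc1 : ((Finset.range (3 ^ (k + 1))).filter
        (fun w => w % 3 = u % 3 ∧ beats k (u / 3) (w / 3) = true)).card = (3 ^ k - 1) / 2 := by
      rw [h3, class_card _ _ (by omega) _]
      exact ih (u / 3) (by omega)
    have hc2 : ((Finset.range (3 ^ (k + 1))).filter
        (fun w => w % 3 = (u % 3 + 1) % 3)).card = 3 ^ k := by
      have e := class_card (3 ^ k) ((u % 3 + 1) % 3) (by omega) (fun _ => true)
      simp only [and_true] at e
      rw [h3]
      rw [e]
      simp
    rw [hsplit, Finset.card_union_of_disjoint hdisj, hc1, hc2]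
    have h2 : (3:ℕ) ^ k % 2 = 1 := by simp [Nat.pow_mod]
    omega

lemma key_step (k : ℕ)
    (ih : ∀ Y : Finset ℕ, (∀ y ∈ Y, y < 3 ^ k) → Y.Nonempty →
      ∃ u ∈ Y, 2 * outDegIn (fun a b => beats k a b = true) Y u + bw Y.card ≤ Y.card)
    (X : Finset ℕ) (hX : ∀ x ∈ X, x < 3 ^ (k + 1))
    (i j l : ℕ) (hi : i < 3) (hj : j = (i + 1) % 3) (hl : l = (i + 2) % 3)
    (hne : (X.filter (fun x => x % 3 = i)).Nonempty)
    (hcond : bw X.card + (X.filter (fun x => x % 3 = j)).card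
      ≤ bw (X.filter (fun x => x % 3 = i)).card + (X.filter (fun x => x % 3 = l)).card) :
    ∃ v ∈ X, 2 * outDegIn (fun a b => beats (k + 1) a b = true) X v + bw X.card ≤ X.card := by
  classical
  have h3 : (3:ℕ) ^ (k + 1) = 3 * 3 ^ k := by ring
  -- card split
  have hjl : (X.filter (fun x => x % 3 = j)) ∪ (X.filter (fun x => x % 3 = l))
      = X.filter (fun x => ¬ x % 3 = i) := by
    rw [Finset.filter_union_right]
    apply Finset.filter_congr
    intro x _
    omega
  have hdisjl : Disjoint (X.filter (fun x => x % 3 = j)) (X.filter (fun x => x % 3 = l)) := by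
    apply Finset.disjoint_left.mpr
    intro x hx1 hx2
    rw [Finset.mem_filter] at hx1 hx2
    omega
  have hsplit : (X.filter (fun x => x % 3 = i)).card + (X.filter (fun x => x % 3 = j)).card
      + (X.filter (fun x => x % 3 = l)).card = X.card := by
    have e1 := Finset.card_filter_add_card_filter_not (s := X)
      (p := fun x => x % 3 = i)
    have e2 := Finset.card_union_of_disjoint hdisjl
    rw [hjl] at e2
    omega
  -- induced part
  have hinj : Set.InjOn (fun x : ℕ => x / 3) (X.filter (fun x => x % 3 = i)) := by
    intro x hx y hy hxy
    simp only [Finset.coe_filter, Set.mem_setOf_eq] at hx hy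
    simp only at hxy
    omega
  have hYcard : ((X.filter (fun x => x % 3 = i)).image (fun x => x / 3)).card
      = (X.filter (fun x => x % 3 = i)).card := Finset.card_image_of_injOn hinj
  have hY : ∀ y ∈ (X.filter (fun x => x % 3 = i)).image (fun x => x / 3), y < 3 ^ k := by
    intro y hy
    obtain ⟨x, hx, rfl⟩ := Finset.mem_image.mp hy
    have := hX x (Finset.mem_filter.mp hx).1
    omega
  obtain ⟨u, huY, hu⟩ := ih _ hY (hne.image _)
  rw [hYcard] at hu
  obtain ⟨v, hvXi, hvu⟩ := Finset.mem_image.mp huY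
  refine ⟨v, (Finset.mem_filter.mp hvXi).1, ?_⟩
  have hvm : v % 3 = i := (Finset.mem_filter.mp hvXi).2
  -- beats facts
  have hBj : ∀ w, w % 3 = j → beats (k + 1) v w = true := by
    intro w hw
    simp only [beats]
    rw [if_neg (by omega), decide_eq_true_eq]
    omega
  have hBl : ∀ w, w % 3 = l → beats (k + 1) v w = false := by
    intro w hw
    simp only [beats]
    rw [if_neg (by omega)]
    simp only [decide_eq_false_iff_not]
    omega
  have hBi : ∀ w, w % 3 = i → beats (k + 1) v w = beats k (v / 3) (w / 3) := by
    intro w hw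
    simp only [beats]
    rw [if_pos (by omega)]
  -- outdegree split
  have hODset : X.filter (fun w => beats (k + 1) v w = true)
      = ((X.filter (fun x => x % 3 = i)).filter (fun w => beats (k + 1) v w = true))
        ∪ (X.filter (fun x => x % 3 = j)) := by
    ext w
    simp only [Finset.mem_filter, Finset.mem_union]
    constructor
    · rintro ⟨hwX, hb⟩
      rcases (show w % 3 = i ∨ w % 3 = j ∨ w % 3 = l by omega) with h | h | h
      · exact Or.inl ⟨⟨hwX, h⟩, hb⟩
      · exact Or.inr ⟨hwX, h⟩
      · rw [hBl w h] at hb; cases hb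
    · rintro (⟨⟨hwX, h⟩, hb⟩ | ⟨hwX, h⟩)
      · exact ⟨hwX, hb⟩
      · exact ⟨hwX, hBj w h⟩
  have hODdisj : Disjoint
      ((X.filter (fun x => x % 3 = i)).filter (fun w => beats (k + 1) v w = true))
      (X.filter (fun x => x % 3 = j)) := by
    apply Finset.disjoint_left.mpr
    intro w hw1 hw2
    rw [Finset.mem_filter, Finset.mem_filter] at hw1
    rw [Finset.mem_filter] at hw2
    omega
  have hOD : outDegIn (fun a b => beats (k + 1) a b = true) X v
      = ((X.filter (fun x => x % 3 = i)).filter (fun w => beats (k + 1) v w = true)).card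
        + (X.filter (fun x => x % 3 = j)).card := by
    rw [outDegIn, hODset, Finset.card_union_of_disjoint hODdisj]
  -- outdegree within the part
  have hODi : ((X.filter (fun x => x % 3 = i)).filter (fun w => beats (k + 1) v w = true)).card
      = outDegIn (fun a b => beats k a b = true)
          ((X.filter (fun x => x % 3 = i)).image (fun x => x / 3)) u := by
    rw [outDegIn, Finset.filter_image]
    rw [Finset.card_image_of_injOn (hinj.mono (Finset.filter_subset _ _))]
    apply congrArg
    apply Finset.filter_congr
    intro w hw
    rw [hBi w (Finset.mem_filter.mp hw).2, hvu]
  omega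

lemma key (k : ℕ) : ∀ X : Finset ℕ, (∀ x ∈ X, x < 3 ^ k) → X.Nonempty →
    ∃ v ∈ X, 2 * outDegIn (fun a b => beats k a b = true) X v + bw X.card ≤ X.card := by
  induction k with
  | zero =>
    intro X hX hne
    obtain ⟨v, hv⟩ := hne
    have hv0 : v = 0 := by have := hX v hv; omega
    have hX0 : X = {0} := by
      apply Finset.eq_singleton_iff_unique_mem.mpr
      exact ⟨hv0 ▸ hv, fun x hx => by have := hX x hx; omega⟩
    subst hX0
    refine ⟨0, Finset.mem_singleton_self 0, ?_⟩
    simp [outDegIn, beats, bw_one]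
  | succ k ih =>
    intro X hX hne
    have hjl : (X.filter (fun x => x % 3 = 1)) ∪ (X.filter (fun x => x % 3 = 2))
        = X.filter (fun x => ¬ x % 3 = 0) := by
      rw [Finset.filter_union_right]
      apply Finset.filter_congr
      intro x _
      omega
    have hdisjl : Disjoint (X.filter (fun x => x % 3 = 1)) (X.filter (fun x => x % 3 = 2)) := by
      apply Finset.disjoint_left.mpr
      intro x hx1 hx2
      rw [Finset.mem_filter] at hx1 hx2
      omega
    have hsplit : (X.filter (fun x => x % 3 = 0)).card + (X.filter (fun x => x % 3 = 1)).card
        + (X.filter (fun x => x % 3 = 2)).card = X.card := by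
      have e1 := Finset.card_filter_add_card_filter_not (s := X)
        (p := fun x => x % 3 = 0)
      have e2 := Finset.card_union_of_disjoint hdisjl
      rw [hjl] at e2
      omega
    have hXpos : 1 ≤ X.card := Finset.card_pos.mpr hne
    rcases bw_L2 (X.filter (fun x => x % 3 = 0)).card (X.filter (fun x => x % 3 = 1)).card
        (X.filter (fun x => x % 3 = 2)).card (by omega)
      with ⟨hpos, hineq⟩ | ⟨hpos, hineq⟩ | ⟨hpos, hineq⟩
    · refine key_step k ih X hX 0 1 2 (by norm_num) (by norm_num) (by norm_num)
        (Finset.card_pos.mp hpos) ?_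
      rw [← hsplit]
      exact hineq
    · refine key_step k ih X hX 1 2 0 (by norm_num) (by norm_num) (by norm_num)
        (Finset.card_pos.mp hpos) ?_
      rw [← hsplit]
      exact hineq
    · refine key_step k ih X hX 2 0 1 (by norm_num) (by norm_num) (by norm_num)
        (Finset.card_pos.mp hpos) ?_
      rw [← hsplit]
      exact hineq

lemma univ_image_val (n : ℕ) : (Finset.univ : Finset (Fin n)).image Fin.val = Finset.range n := by
  ext x
  simp only [Finset.mem_image, Finset.mem_range, Finset.mem_univ, true_and]
  constructor
  · rintro ⟨v, rfl⟩; exact v.isLt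
  · intro h; exact ⟨⟨x, h⟩, rfl⟩

/-- For every `k ≥ 1` and `n = (3^k - 1)/2`, `s = n - 1`, there is a tournament
on `2n` vertices of minimum out-degree at least `s` in which every induced
subdigraph on `n` vertices has minimum out-degree at most `((3^k - 1)/2 - k)/2`
(i.e. at most `s/2 - (k - 1)/2`). -/
theorem exists_bad_tournament (k : ℕ) (hk : 1 ≤ k) :
    ∃ A : Fin (2 * ((3 ^ k - 1) / 2)) → Fin (2 * ((3 ^ k - 1) / 2)) → Bool,
      (∀ v, A v v = false) ∧
      (∀ u v, u ≠ v → A u v = ! A v u) ∧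
      (3 ^ k - 1) / 2 - 1 ≤ minOutDeg (fun u v => A u v = true) Finset.univ ∧
      ∀ X : Finset (Fin (2 * ((3 ^ k - 1) / 2))), X.card = (3 ^ k - 1) / 2 →
        minOutDeg (fun u v => A u v = true) X ≤ ((3 ^ k - 1) / 2 - k) / 2 := by
  classical
  have hodd : (3:ℕ) ^ k % 2 = 1 := by simp [Nat.pow_mod]
  have h3 : 3 ≤ (3:ℕ) ^ k := by
    calc (3:ℕ) = 3 ^ 1 := by norm_num
      _ ≤ 3 ^ k := Nat.pow_le_pow_right (by norm_num) hk
  have hN : 2 * ((3 ^ k - 1) / 2) + 1 = 3 ^ k := by omega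
  refine ⟨fun u v => beats k u.val v.val, fun v => beats_self k v.val, ?_, ?_, ?_⟩
  · intro u v huv
    exact beats_asym k u.val v.val (by omega) (by omega)
      (fun h => huv (Fin.ext h))
  · rw [minOutDeg, dif_pos ⟨⟨0, by omega⟩, Finset.mem_univ _⟩]
    apply Finset.le_inf'
    intro v _
    obtain ⟨w, hwlt, hwe⟩ : ∃ w, w < 2 * ((3 ^ k - 1) / 2) ∧ (v : ℕ) = w := ⟨v, v.isLt, rfl⟩
    have e0 : outDegIn (fun u w : Fin (2 * ((3 ^ k - 1) / 2)) => beats k u.val w.val = true)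
        Finset.univ v
        = ((Finset.range (2 * ((3 ^ k - 1) / 2))).filter
            (fun x => beats k w x = true)).card := by
      rw [outDegIn, ← univ_image_val, Finset.filter_image,
        Finset.card_image_of_injective _ Fin.val_injective]
      simp only [hwe]
    have e1 := beats_count k w (by omega)
    rw [show (3:ℕ) ^ k = 2 * ((3 ^ k - 1) / 2) + 1 from hN.symm, Finset.range_add_one,
      Finset.filter_insert] at e1
    show (3 ^ k - 1) / 2 - 1 ≤ outDegIn
      (fun u w : Fin (2 * ((3 ^ k - 1) / 2)) => beats k u.val w.val = true) Finset.univ v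
    rw [e0]
    split_ifs at e1 with hb
    · have hnm : 2 * ((3 ^ k - 1) / 2) ∉ (Finset.range (2 * ((3 ^ k - 1) / 2))).filter
          (fun x => beats k w x = true) := by simp
      rw [Finset.card_insert_of_notMem hnm] at e1
      omega
    · omega
  · intro X hXcard
    have hXne : X.Nonempty := Finset.card_pos.mp (by rw [hXcard]; omega)
    rw [minOutDeg, dif_pos hXne]
    have himg : ∀ x ∈ X.image Fin.val, x < 3 ^ k := by
      intro x hx
      obtain ⟨v, _, rfl⟩ := Finset.mem_image.mp hx
      have := v.isLt
      omega
    obtain ⟨v', hv'X, hv'⟩ := key k (X.image Fin.val) himg (hXne.image _)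
    obtain ⟨v, hvX, rfl⟩ := Finset.mem_image.mp hv'X
    have ecard : (X.image Fin.val).card = X.card :=
      Finset.card_image_of_injective _ Fin.val_injective
    rw [ecard, hXcard, bw_nk] at hv'
    have eod : outDegIn (fun a b => beats k a b = true) (X.image Fin.val) v.val
        = outDegIn (fun u w : Fin (2 * ((3 ^ k - 1) / 2)) => beats k u.val w.val = true) X v := by
      rw [outDegIn, outDegIn, Finset.filter_image,
        Finset.card_image_of_injective _ Fin.val_injective]
    calc X.inf' hXne (outDegIn (fun u w => beats k u.val w.val = true) X)
        ≤ outDegIn (fun u w : Fin (2 * ((3 ^ k - 1) / 2)) => beats k u.val w.val = true) X v :=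
          Finset.inf'_le _ hvX
      _ ≤ ((3 ^ k - 1) / 2 - k) / 2 := by omega
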